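/- Let f = x³y + y³z + z³t + t³x over an algebraically closed field k of characteristic zero, β ∈ k* with ord(β) = 20, B = diag[1, β, β^{-2}, β⁷], and C the permutation matrix [e_4, e_1, e_2, e_3]. Then f∘B^{-1} = β·f, f∘C^{-1} = f, and CBC^{-1} = β·B^{17}; consequently G_{80} = {(B)^i(C)^j : i ∈ [0,19], j ∈ [0,3]} is a subgroup of PGL_4(k) of order 80 contained in Paut(f). -/

import Mathlib

open MvPolynomial

/-- The linear substitution action of a matrix on polynomials:
`substM A f = f ∘ A`, i.e. `x_i ↦ ∑ j, A i j * x_j`; in the notation of the paper this is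
`f_{A⁻¹}`. -/
noncomputable def substM {k : Type*} [CommSemiring k] (A : Matrix (Fin 4) (Fin 4) k)
    (f : MvPolynomial (Fin 4) k) : MvPolynomial (Fin 4) k :=
  aeval (fun i => ∑ j : Fin 4, MvPolynomial.C (A i j) * X j) f

/-- `(A) ∈ PGL₄(k)` is a projective automorphism of the form `f` if substitution by `A`
sends `f` to a nonzero scalar multiple of itself. -/
def IsProjAut {k : Type*} [Field k] (f : MvPolynomial (Fin 4) k)
    (A : Matrix.GeneralLinearGroup (Fin 4) k) : Prop :=
  ∃ c : kˣ, substM (↑(A⁻¹) : Matrix (Fin 4) (Fin 4) k) f = (c : k) • f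

/-- The diagonal matrix with unit entries, as an element of `GL (Fin 4) k`. -/
noncomputable def diagGL {k : Type*} [Field k] (u : Fin 4 → kˣ) :
    Matrix.GeneralLinearGroup (Fin 4) k where
  val := Matrix.diagonal fun i => (u i : k)
  inv := Matrix.diagonal fun i => ((u i)⁻¹ : kˣ)
  val_inv := by
    rw [Matrix.diagonal_mul_diagonal]
    simp [← Units.val_mul]
  inv_val := by
    rw [Matrix.diagonal_mul_diagonal]
    simp [← Units.val_mul]

/-- The permutation matrix `[e₄, e₁, e₂, e₃]` as an element of `GL (Fin 4) k`. -/
noncomputable def permC {k : Type*} [Field k] : Matrix.GeneralLinearGroup (Fin 4) k :=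
  Matrix.GeneralLinearGroup.mkOfDetNeZero
    (!![0, 1, 0, 0; 0, 0, 1, 0; 0, 0, 0, 1; 1, 0, 0, 0] : Matrix (Fin 4) (Fin 4) k)
    (by simp [Matrix.det_succ_row_zero, Fin.sum_univ_succ,
      show Fin.succAbove (1 : Fin 4) (2 : Fin 3) = 3 by decide])

/-! ### Auxiliary lemmas -/

lemma substM_mul' {k : Type*} [CommSemiring k] (M N : Matrix (Fin 4) (Fin 4) k)
    (f : MvPolynomial (Fin 4) k) : substM (M * N) f = substM N (substM M f) := by
  simp only [substM]
  rw [← AlgHom.comp_apply, MvPolynomial.comp_aeval]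
  have : (fun i => ∑ j : Fin 4, MvPolynomial.C ((M * N) i j) * X j)
      = fun i => (aeval fun i => ∑ j : Fin 4, MvPolynomial.C (N i j) * X j)
        (∑ j : Fin 4, MvPolynomial.C (M i j) * X j) := by
    funext i
    simp [Matrix.mul_apply, Finset.mul_sum, Finset.sum_mul, mul_assoc]
    rw [Finset.sum_comm]
  rw [this]

lemma substM_one' {k : Type*} [CommSemiring k] (f : MvPolynomial (Fin 4) k) :
    substM 1 f = f := by
  simp [substM, Matrix.one_apply, ite_smul, ← C_mul_X_eq_monomial]

lemma substM_smul' {k : Type*} [CommSemiring k] (M : Matrix (Fin 4) (Fin 4) k) (a : k)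
    (f : MvPolynomial (Fin 4) k) : substM M (a • f) = a • substM M f := by
  simp [substM]

lemma substM_diag_f' {k : Type*} [CommRing k] (d : Fin 4 → k) :
    substM (Matrix.diagonal d) (X 0^3*X 1 + X 1^3*X 2 + X 2^3*X 3 + X 3^3*X 0
      : MvPolynomial (Fin 4) k)
    = C (d 0^3*d 1) * (X 0^3*X 1) + C (d 1^3*d 2) * (X 1^3*X 2)
      + C (d 2^3*d 3) * (X 2^3*X 3) + C (d 3^3*d 0) * (X 3^3*X 0) := by
  simp [substM, Fin.sum_univ_four, Matrix.diagonal_apply, map_mul, map_pow]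
  ring

lemma pow_comm_aux' {G : Type*} [Group G] {b c : G} (hcb : c * b = b ^ 17 * c) :
    ∀ j i : ℕ, c ^ j * b ^ i = b ^ (17 ^ j * i) * c ^ j := by
  have h1 : ∀ i : ℕ, c * b ^ i = b ^ (17 * i) * c := by
    intro i
    induction i with
    | zero => simp
    | succ i ih =>
      rw [pow_succ, ← mul_assoc, ih, mul_assoc, hcb, ← mul_assoc, ← pow_add, Nat.mul_succ]
  intro j
  induction j with
  | zero => simp
  | succ j ih =>
    intro i
    rw [pow_succ, mul_assoc, h1, ← mul_assoc, ih, ← mul_assoc, ← pow_succ, pow_succ 17 j,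
      Nat.mul_assoc, Nat.mul_comm 17 i, ← Nat.mul_assoc]
    exact mul_assoc (b ^ (17 ^ j * i * 17)) (c ^ j) c

lemma group_80' {G : Type*} [Group G] (b c : G) (hb : b ^ 20 = 1) (hc : c ^ 4 = 1)
    (hcb : c * b = b ^ 17 * c) (hind : ∀ m n : ℕ, b ^ m = c ^ n → 20 ∣ m ∧ 4 ∣ n) :
    ∃ H : Subgroup G,
      (↑H : Set G) = {x | ∃ i < 20, ∃ j < 4, x = b ^ i * c ^ j} ∧ Nat.card H = 80 ∧
      ∀ x ∈ H, ∃ i j : ℕ, x = b ^ i * c ^ j := by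
  have comm := pow_comm_aux' hcb
  have reduce : ∀ i j : ℕ, ∃ i' < 20, ∃ j' < 4, b ^ i * c ^ j = b ^ i' * c ^ j' := by
    intro i j
    exact ⟨i % 20, Nat.mod_lt _ (by norm_num), j % 4, Nat.mod_lt _ (by norm_num),
      by rw [← pow_eq_pow_mod i hb, ← pow_eq_pow_mod j hc]⟩
  refine ⟨{ carrier := {x | ∃ i < 20, ∃ j < 4, x = b ^ i * c ^ j}
            one_mem' := ⟨0, by norm_num, 0, by norm_num, by simp⟩
            mul_mem' := ?_
            inv_mem' := ?_ }, rfl, ?_, ?_⟩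
  · rintro x y ⟨i, hi, j, hj, rfl⟩ ⟨i', hi', j', hj', rfl⟩
    have : b ^ i * c ^ j * (b ^ i' * c ^ j') = b ^ (i + 17 ^ j * i') * c ^ (j + j') := by
      rw [mul_assoc, ← mul_assoc (c ^ j), comm, pow_add, pow_add]
      group
    rw [this]
    exact reduce _ _
  · rintro x ⟨i, hi, j, hj, rfl⟩
    have hcinv : (c ^ j)⁻¹ = c ^ (3 * j) := by
      rw [inv_eq_iff_mul_eq_one, ← pow_add]
      have : j + 3 * j = 4 * j := by ring
      rw [this, pow_mul, hc, one_pow]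
    have hbinv : (b ^ i)⁻¹ = b ^ (19 * i) := by
      rw [inv_eq_iff_mul_eq_one, ← pow_add]
      have : i + 19 * i = 20 * i := by ring
      rw [this, pow_mul, hb, one_pow]
    have : (b ^ i * c ^ j)⁻¹ = b ^ (17 ^ (3 * j) * (19 * i)) * c ^ (3 * j) := by
      rw [mul_inv_rev, hcinv, hbinv, comm]
    rw [Set.mem_setOf_eq, this]
    exact reduce _ _
  · have uniq : ∀ i < 20, ∀ j < 4, ∀ i' < 20, ∀ j' < 4,
        b ^ i * c ^ j = b ^ i' * c ^ j' → i = i' ∧ j = j' := by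
      intro i hi j hj i' hi' j' hj' h
      have key : b ^ (20 - i' + i) = c ^ (j' + (4 - j)) := by
        have h2 : b ^ (20 - i') * (b ^ i * c ^ j) * c ^ (4 - j)
            = b ^ (20 - i') * (b ^ i' * c ^ j') * c ^ (4 - j) := by rw [h]
        calc b ^ (20 - i' + i) = b ^ (20 - i' + i) * (c ^ j * c ^ (4 - j)) := by
              rw [← pow_add, Nat.add_sub_cancel' (le_of_lt hj), hc, mul_one]
          _ = b ^ (20 - i') * (b ^ i * c ^ j) * c ^ (4 - j) := by
              rw [pow_add]; group
          _ = b ^ (20 - i') * (b ^ i' * c ^ j') * c ^ (4 - j) := h2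
          _ = (b ^ (20 - i') * b ^ i') * (c ^ j' * c ^ (4 - j)) := by group
          _ = c ^ (j' + (4 - j)) := by
              rw [← pow_add, Nat.sub_add_cancel (le_of_lt hi'), hb, one_mul, ← pow_add]
      obtain ⟨h20, h4⟩ := hind _ _ key
      omega
    have hbij : Function.Bijective (fun p : Fin 20 × Fin 4 =>
        (⟨b ^ (p.1 : ℕ) * c ^ (p.2 : ℕ), ⟨p.1, p.1.2, p.2, p.2.2, rfl⟩⟩ :
          {x : G // ∃ i < 20, ∃ j < 4, x = b ^ i * c ^ j})) := by
      constructor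
      · rintro ⟨i, j⟩ ⟨i', j'⟩ hp
        have := uniq i i.2 j j.2 i' i'.2 j' j'.2 (congrArg Subtype.val hp)
        ext
        · exact this.1
        · exact this.2
      · rintro ⟨x, i, hi, j, hj, rfl⟩
        exact ⟨(⟨i, hi⟩, ⟨j, hj⟩), rfl⟩
    have : Nat.card {x : G // ∃ i < 20, ∃ j < 4, x = b ^ i * c ^ j} = 80 := by
      rw [← Nat.card_eq_of_bijective _ hbij]
      simp [Nat.card_eq_fintype_card]
    exact this
  · rintro x ⟨i, _, j, _, rfl⟩
    exact ⟨i, j, rfl⟩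

/-- scalar unit in GL -/
noncomputable def sUnit' {k : Type*} [Field k] (a : kˣ) :
    Matrix.GeneralLinearGroup (Fin 4) k where
  val := (a : k) • (1 : Matrix (Fin 4) (Fin 4) k)
  inv := ((a⁻¹ : kˣ) : k) • (1 : Matrix (Fin 4) (Fin 4) k)
  val_inv := by rw [smul_mul_smul_comm]; simp [← Units.val_mul]
  inv_val := by rw [smul_mul_smul_comm]; simp [← Units.val_mul]

lemma sUnit_mem_center' {k : Type*} [Field k] (a : kˣ) :
    sUnit' a ∈ Subgroup.center (Matrix.GeneralLinearGroup (Fin 4) k) := by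
  rw [Subgroup.mem_center_iff]
  intro g
  apply Units.ext
  show (g.val * ((a : k) • 1) : Matrix (Fin 4) (Fin 4) k) = ((a : k) • 1) * g.val
  rw [Matrix.mul_smul, Matrix.smul_mul, mul_one, one_mul]

lemma center_scalar' {k : Type*} [Field k] {Z : Matrix.GeneralLinearGroup (Fin 4) k}
    (hZ : Z ∈ Subgroup.center (Matrix.GeneralLinearGroup (Fin 4) k)) :
    ∃ r : k, (↑Z : Matrix (Fin 4) (Fin 4) k) = Matrix.scalar (Fin 4) r := by
  have hcomm : ∀ t : Matrix.TransvectionStruct (Fin 4) k,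
      Commute t.toMatrix (↑Z : Matrix (Fin 4) (Fin 4) k) := by
    intro t
    have h := Subgroup.mem_center_iff.mp hZ
      ⟨t.toMatrix, t.inv.toMatrix, t.mul_inv, t.inv_mul⟩
    have := congrArg (Units.val) h
    simpa [Commute, SemiconjBy] using this
  obtain ⟨r, hr⟩ := Matrix.mem_range_scalar_of_commute_transvectionStruct hcomm
  exact ⟨r, hr.symm⟩

lemma diagGL_pow_val' {k : Type*} [Field k] (u : Fin 4 → kˣ) (m : ℕ) :
    (↑(diagGL u ^ m) : Matrix (Fin 4) (Fin 4) k)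
      = Matrix.diagonal fun i => ((u i : k)) ^ m := by
  show ((Matrix.diagonal fun i => (u i : k)) ^ m) = _
  rw [Matrix.diagonal_pow]
  rfl

lemma Cmat_four' {k : Type*} [Field k] : (!![0, 1, 0, 0; 0, 0, 1, 0; 0, 0, 0, 1; 1, 0, 0, 0]
    : Matrix (Fin 4) (Fin 4) k) ^ 4 = 1 := by
  ext i j
  fin_cases i <;> fin_cases j <;>
    simp [pow_succ, Matrix.mul_apply, Fin.sum_univ_four, Matrix.one_apply, Matrix.vecHead,
      Matrix.vecTail]

/-- with `f = x³y + y³z + z³t + t³x`, `β` of order 20,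
`B = diag[1, β, β⁻², β⁷]` and `C = [e₄,e₁,e₂,e₃]`, we have `f_{B⁻¹} = β f`, `f_{C⁻¹} = f`,
and `CBC⁻¹ = β B¹⁷`; consequently `G₈₀ = {(B)^i (C)^j : 0 ≤ i < 20, 0 ≤ j < 4}` is a
subgroup of `PGL₄(k)` of order 80 contained in `Paut(f)`. -/
theorem stmt_16 {k : Type*} [Field k] [IsAlgClosed k] [CharZero k] (β : kˣ)
    (hβ : orderOf β = 20) :
    let f : MvPolynomial (Fin 4) k :=
      X 0 ^ 3 * X 1 + X 1 ^ 3 * X 2 + X 2 ^ 3 * X 3 + X 3 ^ 3 * X 0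
    let Bg : Matrix.GeneralLinearGroup (Fin 4) k := diagGL ![1, β, β⁻¹ ^ 2, β ^ 7]
    let Cg : Matrix.GeneralLinearGroup (Fin 4) k := permC
    substM (↑Bg : Matrix (Fin 4) (Fin 4) k) f = (β : k) • f ∧
    substM (↑Cg : Matrix (Fin 4) (Fin 4) k) f = f ∧
    (↑(Cg * Bg * Cg⁻¹) : Matrix (Fin 4) (Fin 4) k) =
      (β : k) • (↑(Bg ^ 17) : Matrix (Fin 4) (Fin 4) k) ∧
    ∃ H : Subgroup (Matrix.GeneralLinearGroup (Fin 4) k ⧸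
        Subgroup.center (Matrix.GeneralLinearGroup (Fin 4) k)),
      (↑H : Set _) = {x | ∃ i < 20, ∃ j < 4,
        x = (QuotientGroup.mk Bg : Matrix.GeneralLinearGroup (Fin 4) k ⧸
            Subgroup.center (Matrix.GeneralLinearGroup (Fin 4) k)) ^ i *
          (QuotientGroup.mk Cg) ^ j} ∧
      Nat.card H = 80 ∧
      ∀ A : Matrix.GeneralLinearGroup (Fin 4) k, QuotientGroup.mk A ∈ H → IsProjAut f A := by
  intro f Bg Cg
  have hf : f = X 0 ^ 3 * X 1 + X 1 ^ 3 * X 2 + X 2 ^ 3 * X 3 + X 3 ^ 3 * X 0 := rfl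
  have h20 : β ^ 20 = 1 := by rw [← hβ]; exact pow_orderOf_eq_one β
  have h20k : (β : k) ^ 20 = 1 := by rw [← Units.val_pow_eq_pow_val, h20, Units.val_one]
  -- part 1
  have part1 : substM (↑Bg : Matrix (Fin 4) (Fin 4) k) f = (β : k) • f := by
    rw [hf]
    show substM (Matrix.diagonal fun i => ((![1, β, β⁻¹ ^ 2, β ^ 7] : Fin 4 → kˣ) i : k)) _ = _
    rw [substM_diag_f']
    have e0 : ((![1, β, β⁻¹ ^ 2, β ^ 7] : Fin 4 → kˣ) 0 : k) = ((1 : kˣ) : k) := rfl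
    have e1 : ((![1, β, β⁻¹ ^ 2, β ^ 7] : Fin 4 → kˣ) 1 : k) = ((β : kˣ) : k) := rfl
    have e2 : ((![1, β, β⁻¹ ^ 2, β ^ 7] : Fin 4 → kˣ) 2 : k) = ((β⁻¹ ^ 2 : kˣ) : k) := rfl
    have e3 : ((![1, β, β⁻¹ ^ 2, β ^ 7] : Fin 4 → kˣ) 3 : k) = ((β ^ 7 : kˣ) : k) := rfl
    rw [e0, e1, e2, e3]
    have c0 : ((1 : kˣ) : k) ^ 3 * (β : k) = (β : k) := by norm_num
    have c1 : ((β : kˣ) : k) ^ 3 * ((β⁻¹ ^ 2 : kˣ) : k) = (β : k) := by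
      have h : (β : kˣ) ^ 3 * β⁻¹ ^ 2 = β := by group
      calc ((β : kˣ) : k) ^ 3 * ((β⁻¹ ^ 2 : kˣ) : k) = ((β ^ 3 * β⁻¹ ^ 2 : kˣ) : k) := by
            push_cast; ring
        _ = (β : k) := by rw [h]
    have c2 : ((β⁻¹ ^ 2 : kˣ) : k) ^ 3 * ((β ^ 7 : kˣ) : k) = (β : k) := by
      have h : (β⁻¹ ^ 2 : kˣ) ^ 3 * β ^ 7 = β := by group
      calc ((β⁻¹ ^ 2 : kˣ) : k) ^ 3 * ((β ^ 7 : kˣ) : k)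
          = (((β⁻¹ ^ 2) ^ 3 * β ^ 7 : kˣ) : k) := by push_cast; ring
        _ = (β : k) := by rw [h]
    have c3 : ((β ^ 7 : kˣ) : k) ^ 3 * ((1 : kˣ) : k) = (β : k) := by
      have h : (β ^ 7 : kˣ) ^ 3 * 1 = β := by
        rw [mul_one, ← pow_mul]
        calc β ^ (7 * 3) = β ^ 20 * β := by rw [← pow_succ]
          _ = β := by rw [h20, one_mul]
      calc ((β ^ 7 : kˣ) : k) ^ 3 * ((1 : kˣ) : k) = (((β ^ 7) ^ 3 * 1 : kˣ) : k) := by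
            push_cast; ring
        _ = (β : k) := by rw [h]
    rw [c0, c1, c2, c3, smul_eq_C_mul]
    ring
  -- part 2
  have part2 : substM (↑Cg : Matrix (Fin 4) (Fin 4) k) f = f := by
    rw [hf]
    show substM (!![0, 1, 0, 0; 0, 0, 1, 0; 0, 0, 0, 1; 1, 0, 0, 0]
      : Matrix (Fin 4) (Fin 4) k) _ = _
    simp only [substM, Fin.sum_univ_four, Matrix.cons_val', Matrix.cons_val_zero,
      Matrix.cons_val_one, Matrix.head_cons, Matrix.empty_val', Matrix.cons_val_fin_one,
      Matrix.head_fin_const, Matrix.of_apply, Matrix.cons_val_two, Matrix.cons_val_three,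
      Matrix.tail_cons, map_one, map_zero, zero_mul, one_mul, add_zero, zero_add, map_add,
      map_mul, map_pow, aeval_X]
    ring
  -- key GL identity
  have key : Cg * Bg = sUnit' β * Bg ^ 17 * Cg := by
    apply Units.ext
    show (!![0, 1, 0, 0; 0, 0, 1, 0; 0, 0, 0, 1; 1, 0, 0, 0] : Matrix (Fin 4) (Fin 4) k) *
        Matrix.diagonal (fun i => ((![1, β, β⁻¹ ^ 2, β ^ 7] : Fin 4 → kˣ) i : k))
      = ((β : k) • 1) *
          (Matrix.diagonal fun i => ((![1, β, β⁻¹ ^ 2, β ^ 7] : Fin 4 → kˣ) i : k)) ^ 17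
        * !![0, 1, 0, 0; 0, 0, 1, 0; 0, 0, 0, 1; 1, 0, 0, 0]
    have u1 : β * β ^ 17 = β⁻¹ ^ 2 := by
      have h : β ^ 2 * β ^ 18 = 1 := by rw [← pow_add]; exact h20
      calc β * β ^ 17 = β ^ 18 := by rw [← pow_succ']
        _ = β⁻¹ ^ 2 := by rw [inv_pow]; exact (eq_inv_of_mul_eq_one_left h).symm ▸ rfl
    have u2 : β * (β⁻¹ ^ 2) ^ 17 = β ^ 7 := by
      have h : β ^ 34 * β ^ 6 = 1 := by
        rw [← pow_add]
        calc β ^ 40 = (β ^ 20) ^ 2 := by rw [← pow_mul]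
          _ = 1 := by rw [h20, one_pow]
      have h34 : (β ^ 34)⁻¹ = β ^ 6 := inv_eq_of_mul_eq_one_right h
      calc β * (β⁻¹ ^ 2) ^ 17 = β * (β ^ 34)⁻¹ := by rw [← pow_mul, inv_pow]
        _ = β * β ^ 6 := by rw [h34]
        _ = β ^ 7 := by rw [← pow_succ']
    have u3 : β * (β ^ 7) ^ 17 = 1 := by
      calc β * (β ^ 7) ^ 17 = β * β ^ 119 := by rw [← pow_mul]
        _ = β ^ 120 := by rw [← pow_succ']
        _ = (β ^ 20) ^ 6 := by rw [← pow_mul]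
        _ = 1 := by rw [h20, one_pow]
    have k1 : (β : k) * ((β : k)) ^ 17 = ((β⁻¹ ^ 2 : kˣ) : k) := by
      rw [← Units.val_pow_eq_pow_val, ← Units.val_mul, u1]
    have k2 : (β : k) * ((β⁻¹ ^ 2 : kˣ) : k) ^ 17 = ((β ^ 7 : kˣ) : k) := by
      rw [← Units.val_pow_eq_pow_val, ← Units.val_mul, u2]
    have k3 : (β : k) * ((β ^ 7 : kˣ) : k) ^ 17 = 1 := by
      rw [← Units.val_pow_eq_pow_val, ← Units.val_mul, u3, Units.val_one]
    have g1 : ((β : k)) ^ 7 = (β : k) * ((((β : k)) ^ 2) ^ 17)⁻¹ := by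
      have h : β ^ 7 = β * ((β ^ 2) ^ 17)⁻¹ := by rw [← inv_pow, ← inv_pow]; exact u2.symm
      exact_mod_cast congrArg Units.val h
    have g2 : (1 : k) = (β : k) * ((β : k) ^ 7) ^ 17 := k3.symm
    rw [Matrix.diagonal_pow]
    ext i j
    fin_cases i <;> fin_cases j <;>
      simp [Matrix.mul_apply, Fin.sum_univ_four, Matrix.diagonal_apply, Matrix.vecHead,
        Matrix.vecTail, k1, k2, k3] <;>
      first | exact g1 | exact g2
  -- part 3
  have part3 : (↑(Cg * Bg * Cg⁻¹) : Matrix (Fin 4) (Fin 4) k)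
      = (β : k) • (↑(Bg ^ 17) : Matrix (Fin 4) (Fin 4) k) := by
    have h : Cg * Bg * Cg⁻¹ = sUnit' β * Bg ^ 17 := by
      rw [key]; group
    rw [h]
    show ((β : k) • (1 : Matrix (Fin 4) (Fin 4) k)) * (Bg ^ 17).val = _
    rw [Matrix.smul_mul, one_mul]
  refine ⟨part1, part2, part3, ?_⟩
  -- quotient group work
  have hB20 : Bg ^ 20 = 1 := by
    apply Units.ext
    rw [diagGL_pow_val']
    have hvals : (fun i => (((![1, β, β⁻¹ ^ 2, β ^ 7] : Fin 4 → kˣ) i : k)) ^ 20)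
        = fun i => ((((![1, β, β⁻¹ ^ 2, β ^ 7] : Fin 4 → kˣ) i) ^ 20 : kˣ) : k) := by
      funext i; rw [Units.val_pow_eq_pow_val]
    rw [hvals]
    have e : ∀ i : Fin 4, ((![1, β, β⁻¹ ^ 2, β ^ 7] : Fin 4 → kˣ) i) ^ 20 = 1 := by
      intro i
      fin_cases i
      · simp
      · exact h20
      · show (β⁻¹ ^ 2) ^ 20 = 1
        rw [← pow_mul, mul_comm, pow_mul, inv_pow, h20]; simp
      · show (β ^ 7) ^ 20 = 1
        rw [← pow_mul, mul_comm, pow_mul, h20, one_pow]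
    simp only [e]
    simp [Matrix.diagonal_one]
  have hC4 : Cg ^ 4 = 1 := by
    apply Units.ext
    show (!![0, 1, 0, 0; 0, 0, 1, 0; 0, 0, 0, 1; 1, 0, 0, 0] : Matrix (Fin 4) (Fin 4) k) ^ 4 = 1
    exact Cmat_four'
  set N := Subgroup.center (Matrix.GeneralLinearGroup (Fin 4) k) with hN
  have hb : (QuotientGroup.mk Bg : _ ⧸ N) ^ 20 = 1 := by
    show QuotientGroup.mk (Bg ^ 20) = _
    rw [hB20]
    rfl
  have hc : (QuotientGroup.mk Cg : _ ⧸ N) ^ 4 = 1 := by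
    show QuotientGroup.mk (Cg ^ 4) = _
    rw [hC4]
    rfl
  have hcb : (QuotientGroup.mk Cg : _ ⧸ N) * QuotientGroup.mk Bg
      = (QuotientGroup.mk Bg) ^ 17 * QuotientGroup.mk Cg := by
    have h1 : (QuotientGroup.mk (Cg * Bg) : _ ⧸ N)
        = QuotientGroup.mk (sUnit' β * (Bg ^ 17 * Cg)) := by rw [key, mul_assoc]
    have h2 : (QuotientGroup.mk (sUnit' β) : _ ⧸ N) = 1 :=
      (QuotientGroup.eq_one_iff _).mpr (sUnit_mem_center' β)
    calc (QuotientGroup.mk Cg : _ ⧸ N) * QuotientGroup.mk Bg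
        = QuotientGroup.mk (Cg * Bg) := rfl
      _ = QuotientGroup.mk (sUnit' β) * QuotientGroup.mk (Bg ^ 17 * Cg) := h1
      _ = QuotientGroup.mk (Bg ^ 17 * Cg) := by rw [h2, one_mul]
      _ = (QuotientGroup.mk Bg) ^ 17 * QuotientGroup.mk Cg := rfl
  have hind : ∀ m n : ℕ, (QuotientGroup.mk Bg : _ ⧸ N) ^ m = (QuotientGroup.mk Cg) ^ n →
      20 ∣ m ∧ 4 ∣ n := by
    intro m n h
    have h' : (QuotientGroup.mk (Bg ^ m) : _ ⧸ N) = QuotientGroup.mk (Cg ^ n) := h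
    have hmem : (Bg ^ m)⁻¹ * Cg ^ n ∈ N := QuotientGroup.eq.mp h'
    obtain ⟨r, hr⟩ := center_scalar' hmem
    have hmat : (Cg ^ n).val = (Bg ^ m).val * Matrix.scalar (Fin 4) r := by
      have hgrp : Bg ^ m * ((Bg ^ m)⁻¹ * Cg ^ n) = Cg ^ n := by group
      calc (Cg ^ n).val = (Bg ^ m * ((Bg ^ m)⁻¹ * Cg ^ n)).val := by rw [hgrp]
        _ = (Bg ^ m).val * ((Bg ^ m)⁻¹ * Cg ^ n).val := Units.val_mul _ _
        _ = (Bg ^ m).val * Matrix.scalar (Fin 4) r := by rw [hr]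
    have hCval : (Cg ^ n).val
        = (!![0, 1, 0, 0; 0, 0, 1, 0; 0, 0, 0, 1; 1, 0, 0, 0]
            : Matrix (Fin 4) (Fin 4) k) ^ n := rfl
    have hBval := diagGL_pow_val' (k := k) ![1, β, β⁻¹ ^ 2, β ^ 7] m
    rw [hCval, hBval] at hmat
    have hscal : Matrix.scalar (Fin 4) r = Matrix.diagonal (fun _ => r) := rfl
    rw [hscal, Matrix.diagonal_mul_diagonal] at hmat
    have h4 : (!![0, 1, 0, 0; 0, 0, 1, 0; 0, 0, 0, 1; 1, 0, 0, 0]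
        : Matrix (Fin 4) (Fin 4) k) ^ 4 = 1 := Cmat_four'
    rw [pow_eq_pow_mod n h4] at hmat
    have hn4 : n % 4 < 4 := Nat.mod_lt _ (by norm_num)
    set q := n % 4 with hq
    interval_cases q
    · have h00 := congrFun (congrFun hmat 0) 0
      have h11 := congrFun (congrFun hmat 1) 1
      simp [Matrix.diagonal_apply, Matrix.one_apply] at h00 h11
      have hbm : (β : k) ^ m = 1 := by
        rw [← h00, mul_one] at h11
        exact h11.symm
      have hu : β ^ m = 1 := by
        apply Units.ext
        rw [Units.val_pow_eq_pow_val, hbm, Units.val_one]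
      have hdvd : orderOf β ∣ m := orderOf_dvd_of_pow_eq_one hu
      rw [hβ] at hdvd
      exact ⟨hdvd, Nat.dvd_of_mod_eq_zero hq.symm⟩
    · exfalso
      have h01 := congrFun (congrFun hmat 0) 1
      simp [Matrix.diagonal_apply] at h01
    · exfalso
      have h02 := congrFun (congrFun hmat 0) 2
      simp [pow_succ, Matrix.mul_apply, Fin.sum_univ_four, Matrix.diagonal_apply,
        Matrix.vecHead, Matrix.vecTail] at h02
    · exfalso
      have h03 := congrFun (congrFun hmat 0) 3
      simp [pow_succ, Matrix.mul_apply, Fin.sum_univ_four, Matrix.diagonal_apply,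
        Matrix.vecHead, Matrix.vecTail] at h03
  obtain ⟨H, hcar, hcard, hform⟩ :=
    group_80' (QuotientGroup.mk Bg : _ ⧸ N) (QuotientGroup.mk Cg) hb hc hcb hind
  refine ⟨H, hcar, hcard, ?_⟩
  -- the Paut part
  intro A hA
  have hAS : (QuotientGroup.mk A : _ ⧸ N) ∈ (↑H : Set _) := hA
  rw [hcar] at hAS
  obtain ⟨i, _, j, _, hx⟩ := hAS
  have hx' : (QuotientGroup.mk A : _ ⧸ N) = QuotientGroup.mk (Bg ^ i * Cg ^ j) := hx
  have hZmem : A⁻¹ * (Bg ^ i * Cg ^ j) ∈ N := QuotientGroup.eq.mp hx'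
  set Z := A⁻¹ * (Bg ^ i * Cg ^ j) with hZ
  obtain ⟨r, hr⟩ := center_scalar' hZmem
  have hr0 : r ≠ 0 := by
    intro h0
    have hdet : IsUnit ((↑Z : Matrix (Fin 4) (Fin 4) k).det) :=
      (Matrix.isUnit_iff_isUnit_det _).mp Z.isUnit
    rw [hr, h0] at hdet
    have : Matrix.scalar (Fin 4) (0 : k) = (0 : Matrix (Fin 4) (Fin 4) k) := by
      simp
    rw [this] at hdet
    simp at hdet
  have hru : IsUnit r := isUnit_iff_ne_zero.mpr hr0
  -- predicate and closure properties
  set P : Matrix.GeneralLinearGroup (Fin 4) k → Prop :=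
    fun M => ∃ c : kˣ, substM (↑M : Matrix (Fin 4) (Fin 4) k) f = (c : k) • f with hP
  have Pmul : ∀ M M', P M → P M' → P (M * M') := by
    rintro M M' ⟨cM, hM⟩ ⟨cM', hM'⟩
    refine ⟨cM * cM', ?_⟩
    have hval : (↑(M * M') : Matrix (Fin 4) (Fin 4) k)
        = (↑M : Matrix (Fin 4) (Fin 4) k) * (↑M' : Matrix (Fin 4) (Fin 4) k) :=
      Units.val_mul _ _
    rw [hval, substM_mul', hM, substM_smul', hM', smul_smul, Units.val_mul]
  have Pone : P 1 := by
    refine ⟨1, ?_⟩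
    have hval : (↑(1 : Matrix.GeneralLinearGroup (Fin 4) k)
      : Matrix (Fin 4) (Fin 4) k) = 1 := rfl
    rw [hval, substM_one']
    simp
  have Ppow : ∀ (M : Matrix.GeneralLinearGroup (Fin 4) k) (n : ℕ), P M → P (M ^ n) := by
    intro M n hM
    induction n with
    | zero => simpa using Pone
    | succ n ih => rw [pow_succ]; exact Pmul _ _ ih hM
  have Pinv : ∀ M, P M → P M⁻¹ := by
    rintro M ⟨cM, hM⟩
    refine ⟨cM⁻¹, ?_⟩
    have h1 : substM (M.val * (M⁻¹).val) f = f := by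
      have hval : M.val * (M⁻¹).val = 1 := by
        rw [← Units.val_mul, mul_inv_cancel, Units.val_one]
      rw [hval, substM_one']
    rw [substM_mul', hM, substM_smul'] at h1
    calc substM ((M⁻¹).val) f
        = ((cM⁻¹ : kˣ) : k) • ((cM : k) • substM ((M⁻¹).val) f) := by
          rw [smul_smul, ← Units.val_mul, inv_mul_cancel, Units.val_one, one_smul]
      _ = ((cM⁻¹ : kˣ) : k) • f := by rw [h1]
  have PZ : P Z := by
    refine ⟨hru.unit ^ 4, ?_⟩
    have hval : (↑Z : Matrix (Fin 4) (Fin 4) k) = Matrix.diagonal (fun _ => r) := hr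
    rw [hval, hf, substM_diag_f']
    have hcoe : ((hru.unit ^ 4 : kˣ) : k) = r ^ 4 := by
      rw [Units.val_pow_eq_pow_val, IsUnit.unit_spec]
    rw [hcoe, smul_eq_C_mul, show r ^ 3 * r = r ^ 4 by ring]
    ring
  have PB : P Bg := ⟨β, part1⟩
  have PC : P Cg := ⟨1, by simpa using part2⟩
  have PW : P (Bg ^ i * Cg ^ j) := Pmul _ _ (Ppow _ i PB) (Ppow _ j PC)
  have hAinv : A⁻¹ = Z * (Bg ^ i * Cg ^ j)⁻¹ := by rw [hZ]; group
  have : P (A⁻¹) := by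
    rw [hAinv]
    exact Pmul _ _ PZ (Pinv _ PW)
  exact this
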